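/- Fix j ∈ {1,…,d} and suppose ∑_{e ∈ E, j ∈ e} W(e) ≥ 1. Let 𝓘 be a finite family of pairwise disjoint subsets of ℤ. Then ∑_{I ∈ 𝓘} ∏_{e ∈ E} |{t ∈ R_e : if j ∈ e then t(j) ∈ I}|^{W(e)} ≤ ∏_{e ∈ E} |R_e|^{W(e)}. -/

import Mathlib

open Classical

/-- Real power with the convention that `0 ^ y = 0` for every exponent `y`
(in particular `0 ^ 0 = 0`); for nonzero base it is the usual real power. -/
noncomputable def pow0 (a y : ℝ) : ℝ := if a = 0 then 0 else Real.rpow a y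

lemma pow0_nonneg {a : ℝ} (ha : 0 ≤ a) (y : ℝ) : 0 ≤ pow0 a y := by
  unfold pow0
  split
  · exact le_refl 0
  · exact Real.rpow_nonneg ha y

theorem single_attribute_agm_step
    (d : ℕ) (hd : 0 < d)
    (E : Finset (Finset (Fin d))) (hE : E.Nonempty) (hEne : ∀ e ∈ E, e.Nonempty)
    (R : Finset (Fin d) → Finset (Fin d → ℤ))
    (W : Finset (Fin d) → ℝ) (hW : ∀ e ∈ E, 0 ≤ W e)
    (j : Fin d) (hcov : 1 ≤ ∑ e ∈ E.filter (fun e => j ∈ e), W e)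
    (K : ℕ) (I : Fin K → Set ℤ)
    (hdisj : ∀ a b : Fin K, a ≠ b → Disjoint (I a) (I b)) :
    ∑ a : Fin K, ∏ e ∈ E,
        pow0 (((R e).filter (fun t => j ∈ e → t j ∈ I a)).card : ℝ) (W e)
      ≤ ∏ e ∈ E, pow0 ((R e).card : ℝ) (W e) := by
  classical
  set E₁ := E.filter (fun e => j ∈ e) with hE₁def
  set S : ℝ := ∑ e ∈ E₁, W e with hSdef
  have hS1 : (1:ℝ) ≤ S := hcov
  have hSpos : (0:ℝ) < S := lt_of_lt_of_le one_pos hS1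
  set n : Fin K → Finset (Fin d) → ℝ :=
    fun a e => (((R e).filter (fun t => j ∈ e → t j ∈ I a)).card : ℝ) with hndef
  set P : Finset (Fin d) → ℝ := fun e => ((R e).card : ℝ) with hPdef
  by_cases hzero : ∃ e ∈ E, (R e).card = 0
  · obtain ⟨e₀, he₀, hc⟩ := hzero
    have hRHS : ∏ e ∈ E, pow0 (P e) (W e) = 0 := by
      refine Finset.prod_eq_zero he₀ ?_
      simp [pow0, hPdef, hc]
    rw [hRHS]
    have hLHS : ∀ a : Fin K, ∏ e ∈ E, pow0 (n a e) (W e) = 0 := by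
      intro a
      refine Finset.prod_eq_zero he₀ ?_
      have : ((R e₀).filter (fun t => j ∈ e₀ → t j ∈ I a)).card = 0 :=
        Nat.le_zero.mp (le_trans (Finset.card_filter_le _ _) hc.le)
      simp [pow0, hndef, this]
    exact le_of_eq (Finset.sum_eq_zero fun a _ => hLHS a)
  · push_neg at hzero
    have hPpos : ∀ e ∈ E, 0 < P e := by
      intro e he
      have := hzero e he
      have h2 : 0 < (R e).card := Nat.pos_of_ne_zero this
      simp only [hPdef]
      exact_mod_cast h2
    have hnle : ∀ a e, e ∈ E → n a e ≤ P e := by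
      intro a e he
      simp only [hndef, hPdef]
      exact_mod_cast Finset.card_filter_le (R e) _
    have hnnn : ∀ a e, (0:ℝ) ≤ n a e := fun a e => by positivity
    -- Key per-a bound
    have key : ∀ a : Fin K, ∏ e ∈ E, pow0 (n a e) (W e)
        ≤ (∏ e ∈ E, pow0 (P e) (W e)) * ∑ e ∈ E₁, (W e / S) * (n a e / P e) := by
      intro a
      have hRHSnn : 0 ≤ (∏ e ∈ E, pow0 (P e) (W e)) * ∑ e ∈ E₁, (W e / S) * (n a e / P e) := by
        apply mul_nonneg
        · exact Finset.prod_nonneg fun e he => pow0_nonneg (le_of_lt (hPpos e he)) _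
        · refine Finset.sum_nonneg fun e he => ?_
          have heE : e ∈ E := Finset.mem_of_mem_filter e he
          have := hW e heE
          have := hPpos e heE
          have := hnnn a e
          positivity
      by_cases hz : ∃ e ∈ E, n a e = 0
      · obtain ⟨e₀, he₀, hn0⟩ := hz
        have : ∏ e ∈ E, pow0 (n a e) (W e) = 0 :=
          Finset.prod_eq_zero he₀ (by simp [pow0, hn0])
        rw [this]; exact hRHSnn
      · push_neg at hz
        have hnpos : ∀ e ∈ E, 0 < n a e := fun e he =>
          lt_of_le_of_ne (hnnn a e) (Ne.symm (hz e he))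
        -- rewrite pow0 as rpow everywhere
        have hL : ∏ e ∈ E, pow0 (n a e) (W e) = ∏ e ∈ E, (n a e) ^ (W e) := by
          refine Finset.prod_congr rfl fun e he => ?_
          simp [pow0, (hnpos e he).ne']
        have hR : ∏ e ∈ E, pow0 (P e) (W e) = ∏ e ∈ E, (P e) ^ (W e) := by
          refine Finset.prod_congr rfl fun e he => ?_
          simp [pow0, (hPpos e he).ne']
        rw [hL, hR]
        have hfac : ∀ e ∈ E, (n a e) ^ (W e) = (P e) ^ (W e) * (n a e / P e) ^ (W e) := by
          intro e he
          rw [← Real.mul_rpow (le_of_lt (hPpos e he)) (by positivity)]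
          rw [mul_div_cancel₀ _ (hPpos e he).ne']
        rw [Finset.prod_congr rfl hfac, Finset.prod_mul_distrib]
        refine mul_le_mul_of_nonneg_left ?_
          (Finset.prod_nonneg fun e he => Real.rpow_nonneg (le_of_lt (hPpos e he)) _)
        -- ratios: product over E equals product over E₁
        have hsub : E₁ ⊆ E := Finset.filter_subset _ _
        have hone : ∀ e ∈ E, e ∉ E₁ → (n a e / P e) ^ (W e) = 1 := by
          intro e he he1
          have hj : j ∉ e := by
            intro hj
            exact he1 (Finset.mem_filter.mpr ⟨he, hj⟩)
          have : (R e).filter (fun t => j ∈ e → t j ∈ I a) = R e := by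
            apply Finset.filter_true_of_mem
            intro t _ hjmem
            exact absurd hjmem hj
          have hnp : n a e = P e := by simp [hndef, hPdef, this]
          rw [hnp, div_self (hPpos e he).ne', Real.one_rpow]
        rw [← Finset.prod_subset hsub hone]
        -- now over E₁
        have hratio : ∀ e ∈ E₁, (0:ℝ) < n a e / P e ∧ n a e / P e ≤ 1 := by
          intro e he
          have heE := hsub he
          constructor
          · exact div_pos (hnpos e heE) (hPpos e heE)
          · exact div_le_one_of_le₀ (hnle a e heE) (le_of_lt (hPpos e heE))
        calc ∏ e ∈ E₁, (n a e / P e) ^ (W e)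
            ≤ ∏ e ∈ E₁, (n a e / P e) ^ (W e / S) := by
              refine Finset.prod_le_prod (fun e he => Real.rpow_nonneg (le_of_lt (hratio e he).1) _)
                (fun e he => ?_)
              exact Real.rpow_le_rpow_of_exponent_ge (hratio e he).1 (hratio e he).2
                (div_le_self (hW e (hsub he)) hS1)
          _ ≤ ∑ e ∈ E₁, (W e / S) * (n a e / P e) := by
              refine Real.geom_mean_le_arith_mean_weighted E₁ _ _
                (fun e he => div_nonneg (hW e (hsub he)) (le_of_lt hSpos)) ?_
                (fun e he => le_of_lt (hratio e he).1)
              rw [← Finset.sum_div, ← hSdef, div_self hSpos.ne']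
    -- sum the key bound
    calc ∑ a : Fin K, ∏ e ∈ E, pow0 (n a e) (W e)
        ≤ ∑ a : Fin K, (∏ e ∈ E, pow0 (P e) (W e)) * ∑ e ∈ E₁, (W e / S) * (n a e / P e) :=
          Finset.sum_le_sum fun a _ => key a
      _ = (∏ e ∈ E, pow0 (P e) (W e)) * ∑ e ∈ E₁, (W e / S) * ((∑ a : Fin K, n a e) / P e) := by
          rw [← Finset.mul_sum, Finset.sum_comm]
          congr 1
          refine Finset.sum_congr rfl fun e _ => ?_
          rw [← Finset.mul_sum, Finset.sum_div]
      _ ≤ (∏ e ∈ E, pow0 (P e) (W e)) * 1 := by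
          refine mul_le_mul_of_nonneg_left ?_
            (Finset.prod_nonneg fun e he => pow0_nonneg (le_of_lt (hPpos e he)) _)
          have hsub : E₁ ⊆ E := Finset.filter_subset _ _
          have hsum1 : ∑ e ∈ E₁, W e / S = 1 := by
            rw [← Finset.sum_div, ← hSdef, div_self hSpos.ne']
          calc ∑ e ∈ E₁, (W e / S) * ((∑ a : Fin K, n a e) / P e)
              ≤ ∑ e ∈ E₁, (W e / S) * 1 := by
                refine Finset.sum_le_sum fun e he => ?_
                have heE := hsub he
                refine mul_le_mul_of_nonneg_left ?_
                  (div_nonneg (hW e heE) (le_of_lt hSpos))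
                rw [div_le_one (hPpos e heE)]
                -- ∑ a, n a e ≤ P e by disjointness
                have hj : j ∈ e := (Finset.mem_filter.mp he).2
                have hdisj' : ∀ a b : Fin K, a ≠ b →
                    Disjoint ((R e).filter (fun t => j ∈ e → t j ∈ I a))
                             ((R e).filter (fun t => j ∈ e → t j ∈ I b)) := by
                  intro a b hab
                  rw [Finset.disjoint_left]
                  intro t hta htb
                  have h1 := (Finset.mem_filter.mp hta).2 hj
                  have h2 := (Finset.mem_filter.mp htb).2 hj
                  exact (Set.disjoint_left.mp (hdisj a b hab)) h1 h2
                have hcard : ∑ a : Fin K, ((R e).filter (fun t => j ∈ e → t j ∈ I a)).card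
                    ≤ (R e).card := by
                  rw [← Finset.card_biUnion (fun a _ b _ hab => hdisj' a b hab)]
                  exact Finset.card_le_card (Finset.biUnion_subset.mpr
                    (fun a _ => Finset.filter_subset _ _))
                calc ∑ a : Fin K, n a e
                    = ((∑ a : Fin K, ((R e).filter (fun t => j ∈ e → t j ∈ I a)).card : ℕ) : ℝ) := by
                      push_cast [hndef]; rfl
                  _ ≤ P e := by simp only [hPdef]; exact_mod_cast hcard
            _ = 1 := by simp [hsum1, ← Finset.sum_div]
      _ = ∏ e ∈ E, pow0 (P e) (W e) := mul_one _
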